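/- Let d be a positive integer dividing 2N, and set d⁻ = d/gcd(2,d). For a sequence of nonnegative integers (α_1,…,α_ℓ) with Σα_i ≤ N, the evaluation at q = ω_d (a primitive d-th root of unity) of the q²-multinomial coefficient [N choose α_1,…,α_ℓ]_{q²} equals the ordinary multinomial coefficient binom(N/d⁻; α_1/d⁻,…,α_ℓ/d⁻) if d divides 2α_i for all i, and equals 0 otherwise. -/

import Mathlib

open Finset Polynomial

/-- The Gaussian binomial coefficient `[n choose k]_q` as a polynomial in `q`. -/
noncomputable def qbinom : ℕ → ℕ → Polynomial ℤ
  | _, 0 => 1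
  | 0, _ + 1 => 0
  | n + 1, k + 1 => qbinom n k + Polynomial.X ^ (k + 1) * qbinom n (k + 1)

/-- The q-multinomial coefficient `[N choose ν]_q` as a polynomial in `q`;
it vanishes when the entries of `ν` sum to more than `N`. -/
noncomputable def qmultinom (N : ℕ) : List ℕ → Polynomial ℤ
  | [] => 1
  | a :: l => qbinom N a * qmultinom (N - a) l

lemma qbinom_zero_right (n : ℕ) : qbinom n 0 = 1 := by cases n <;> rfl

lemma qbinom_succ_succ (n k : ℕ) :
    qbinom (n+1) (k+1) = qbinom n k + Polynomial.X ^ (k + 1) * qbinom n (k + 1) := rfl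

lemma qbinom_eq_zero_of_lt : ∀ {n k : ℕ}, n < k → qbinom n k = 0
  | 0, _+1, _ => rfl
  | n+1, k+1, h => by
      rw [qbinom_succ_succ, qbinom_eq_zero_of_lt (by omega), qbinom_eq_zero_of_lt (by omega)]
      ring

lemma qbinom_self : ∀ n : ℕ, qbinom n n = 1
  | 0 => rfl
  | n+1 => by
      rw [qbinom_succ_succ, qbinom_self n, qbinom_eq_zero_of_lt (by omega)]
      ring

lemma qbinom_prod_formula : ∀ n k : ℕ, k ≤ n →
    (∏ i ∈ Finset.range k, (1 - Polynomial.X ^ (i+1))) * qbinom n k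
      = ∏ i ∈ Finset.range k, (1 - (Polynomial.X : Polynomial ℤ) ^ (n - k + i + 1)) := by
  intro n
  induction n with
  | zero =>
    intro k hk
    interval_cases k
    simp [qbinom_zero_right]
  | succ n ih =>
    intro k hk
    cases k with
    | zero => simp [qbinom_zero_right]
    | succ k =>
      rcases Nat.lt_or_ge k n with h | h
      · -- k + 1 ≤ n
        obtain ⟨j, rfl⟩ : ∃ j, n = k + 1 + j := ⟨n - (k+1), by omega⟩
        have h1 := ih k (by omega)
        have h2 := ih (k+1) (by omega)
        have e1 : k + 1 + j - k = j + 1 := by omega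
        have e2 : k + 1 + j - (k+1) = j := by omega
        have e3 : k + 1 + j + 1 - (k+1) = j + 1 := by omega
        rw [e1] at h1
        rw [e2] at h2
        rw [e3]
        have hs1 : (∏ i ∈ Finset.range (k+1), ((1:Polynomial ℤ) - X ^ (i+1)))
            = (∏ i ∈ Finset.range k, ((1:Polynomial ℤ) - X ^ (i+1))) * (1 - X ^ (k+1)) :=
          Finset.prod_range_succ _ k
        have hs2 : (∏ i ∈ Finset.range (k+1), ((1:Polynomial ℤ) - X ^ (j+i+1)))
            = (∏ i ∈ Finset.range k, ((1:Polynomial ℤ) - X ^ (j+1+i+1))) * (1 - X ^ (j+1)) := by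
          rw [Finset.prod_range_succ' (f := fun i => (1:Polynomial ℤ) - X ^ (j+i+1))]
          simp only [show ∀ i : ℕ, j + (i+1) + 1 = j+1+i+1 from fun i => by omega, Nat.add_zero]
        have hs3 : (∏ i ∈ Finset.range (k+1), ((1:Polynomial ℤ) - X ^ (j+1+i+1)))
            = (∏ i ∈ Finset.range k, ((1:Polynomial ℤ) - X ^ (j+1+i+1))) * (1 - X ^ (j+1+k+1)) :=
          Finset.prod_range_succ _ k
        rw [hs1, hs2] at h2
        rw [qbinom_succ_succ, hs1, hs3]
        linear_combination (1 - (X:Polynomial ℤ)^(k+1)) * h1 + (X:Polynomial ℤ)^(k+1) * h2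
      · -- k = n
        have : k = n := by omega
        subst this
        rw [qbinom_self]
        have : ∀ i, k + 1 - (k+1) + i + 1 = i + 1 := by omega
        simp only [this, mul_one]

lemma one_sub_X_pow_ne_zero (i : ℕ) : (1 - (X:Polynomial ℤ) ^ (i+1)) ≠ 0 := by
  intro h
  have := congrArg (Polynomial.eval 0) h
  simp at this

lemma prod_one_sub_X_pow_ne_zero (k : ℕ) :
    (∏ i ∈ Finset.range k, ((1:Polynomial ℤ) - X ^ (i+1))) ≠ 0 :=
  Finset.prod_ne_zero_iff.mpr fun i _ => one_sub_X_pow_ne_zero i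

lemma qbinom_absorb (n k : ℕ) :
    (1 - Polynomial.X ^ (k+1)) * qbinom n (k+1)
      = (1 - Polynomial.X ^ (n - k)) * qbinom n k := by
  rcases Nat.lt_or_ge n (k+1) with h | h
  · rw [qbinom_eq_zero_of_lt h, show n - k = 0 by omega]
    rcases Nat.lt_or_ge n k with h' | h'
    · rw [qbinom_eq_zero_of_lt h']; ring
    · have : n = k := by omega
      subst this
      rw [qbinom_self]; ring
  · -- k + 1 ≤ n
    apply mul_left_cancel₀ (prod_one_sub_X_pow_ne_zero k)
    have h1 := qbinom_prod_formula n k (by omega)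
    have h2 := qbinom_prod_formula n (k+1) h
    rw [Finset.prod_range_succ (f := fun i => (1:Polynomial ℤ) - X ^ (i+1))] at h2
    obtain ⟨j, rfl⟩ : ∃ j, n = k + 1 + j := ⟨n - (k+1), by omega⟩
    have e1 : k + 1 + j - k = j + 1 := by omega
    have e2 : k + 1 + j - (k+1) = j := by omega
    rw [e1] at h1 ⊢
    rw [e2] at h2
    have hs2 : (∏ i ∈ Finset.range (k+1), ((1:Polynomial ℤ) - X ^ (j+i+1)))
        = (∏ i ∈ Finset.range k, ((1:Polynomial ℤ) - X ^ (j+1+i+1))) * (1 - X ^ (j+1)) := by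
      rw [Finset.prod_range_succ' (f := fun i => (1:Polynomial ℤ) - X ^ (j+i+1))]
      simp only [show ∀ i : ℕ, j + (i+1) + 1 = j+1+i+1 from fun i => by omega, Nat.add_zero]
    rw [hs2] at h2
    linear_combination h2 - (1 - (X:Polynomial ℤ)^(j+1)) * h1

lemma qbinom_succ_succ' (n k : ℕ) :
    qbinom (n+1) (k+1) = Polynomial.X ^ (n - k) * qbinom n k + qbinom n (k+1) := by
  linear_combination qbinom_succ_succ n k - qbinom_absorb n k

section Eval

variable (q : ℂ)

lemma aeval_qbinom_zero (n : ℕ) : aeval q (qbinom n 0) = 1 := by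
  rw [qbinom_zero_right]; simp

lemma aeval_qbinom_self (n : ℕ) : aeval q (qbinom n n) = 1 := by
  rw [qbinom_self]; simp

lemma aeval_qbinom_of_lt {n k : ℕ} (h : n < k) : aeval q (qbinom n k) = 0 := by
  rw [qbinom_eq_zero_of_lt h]; simp

lemma aeval_qbinom_R1 (n k : ℕ) :
    aeval q (qbinom (n+1) (k+1))
      = aeval q (qbinom n k) + q ^ (k+1) * aeval q (qbinom n (k+1)) := by
  rw [qbinom_succ_succ]; simp

lemma aeval_qbinom_R2 (n k t : ℕ) (h : n = k + t) :
    aeval q (qbinom (n+1) (k+1))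
      = q ^ t * aeval q (qbinom n k) + aeval q (qbinom n (k+1)) := by
  rw [qbinom_succ_succ', show n - k = t by omega]; simp

variable {q} {m : ℕ} (hq : IsPrimitiveRoot q m)
include hq

lemma qpow_mod (t : ℕ) : q ^ t = q ^ (t % m) := by
  conv_lhs => rw [← Nat.div_add_mod t m]
  rw [pow_add, pow_mul, hq.pow_eq_one, one_pow, one_mul]

lemma aeval_qbinom_m_eq_zero {k : ℕ} (h0 : 0 < k) (hkm : k < m) :
    aeval q (qbinom m k) = 0 := by
  have hP := congrArg (aeval q) (qbinom_prod_formula m k (le_of_lt hkm))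
  rw [map_mul, map_prod, map_prod] at hP
  simp only [map_sub, map_one, map_pow, aeval_X] at hP
  have hrhs : (∏ i ∈ Finset.range k, (1 - q ^ (m - k + i + 1))) = 0 := by
    apply Finset.prod_eq_zero (i := k - 1) (by simp [Finset.mem_range]; omega)
    rw [show m - k + (k-1) + 1 = m by omega, hq.pow_eq_one, sub_self]
  rw [hrhs] at hP
  have hlhs : (∏ i ∈ Finset.range k, (1 - q ^ (i + 1))) ≠ 0 := by
    apply Finset.prod_ne_zero_iff.mpr
    intro i hi
    rw [Finset.mem_range] at hi
    have := hq.pow_ne_one_of_pos_of_lt (l := i+1) (by omega) (by omega)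
    intro hc
    exact this (by linear_combination -hc)
  exact (mul_eq_zero.mp hP).resolve_left hlhs

end Eval

lemma qlucas {q : ℂ} {m : ℕ} (hq : IsPrimitiveRoot q m) (hm : 0 < m) :
    ∀ n k, aeval q (qbinom n k)
      = ((n / m).choose (k / m) : ℂ) * aeval q (qbinom (n % m) (k % m)) := by
  intro n
  induction n with
  | zero =>
    intro k
    cases k with
    | zero => simp [aeval_qbinom_zero]
    | succ k =>
      rw [aeval_qbinom_of_lt q (by omega), Nat.zero_div, Nat.zero_mod]
      rcases Nat.eq_zero_or_pos ((k+1) / m) with h | h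
      · have hlt : k + 1 < m := ((Nat.div_eq_zero_iff).mp h).resolve_left (by omega)
        rw [h, Nat.mod_eq_of_lt hlt, aeval_qbinom_of_lt q (by omega), mul_zero]
      · obtain ⟨t, ht⟩ := Nat.exists_eq_succ_of_ne_zero (Nat.pos_iff_ne_zero.mp h)
        rw [ht, Nat.choose_zero_succ, Nat.cast_zero, zero_mul]
  | succ n ih =>
    intro k
    cases k with
    | zero => simp [aeval_qbinom_zero]
    | succ k =>
      obtain ⟨a, b, hb, hab⟩ : ∃ a b, b < m ∧ n = m * a + b :=
        ⟨n / m, n % m, Nat.mod_lt n hm, (Nat.div_add_mod n m).symm⟩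
      obtain ⟨c, e, he, hce⟩ : ∃ c e, e < m ∧ k = m * c + e :=
        ⟨k / m, k % m, Nat.mod_lt k hm, (Nat.div_add_mod k m).symm⟩
      have hna : n / m = a := by rw [hab, Nat.mul_add_div hm, Nat.div_eq_of_lt hb, add_zero]
      have hnb : n % m = b := by rw [hab, Nat.mul_add_mod, Nat.mod_eq_of_lt hb]
      have hkc : k / m = c := by rw [hce, Nat.mul_add_div hm, Nat.div_eq_of_lt he, add_zero]
      have hke : k % m = e := by rw [hce, Nat.mul_add_mod, Nat.mod_eq_of_lt he]
      rcases Nat.lt_or_ge (b+1) m with hbm | hbm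
      · -- (n+1) % m ≠ 0
        have hn1eq : n + 1 = m * a + (b + 1) := by omega
        have hn1a : (n+1) / m = a := by
          rw [hn1eq, Nat.mul_add_div hm, Nat.div_eq_of_lt hbm, add_zero]
        have hn1b : (n+1) % m = b + 1 := by
          rw [hn1eq, Nat.mul_add_mod, Nat.mod_eq_of_lt hbm]
        rcases Nat.lt_or_ge (e+1) m with hem | hem
        · -- (k+1) % m ≠ 0
          have hk1eq : k + 1 = m * c + (e + 1) := by omega
          have hk1c : (k+1) / m = c := by
            rw [hk1eq, Nat.mul_add_div hm, Nat.div_eq_of_lt hem, add_zero]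
          have hk1e : (k+1) % m = e + 1 := by
            rw [hk1eq, Nat.mul_add_mod, Nat.mod_eq_of_lt hem]
          rw [aeval_qbinom_R1, ih k, ih (k+1), hna, hnb, hkc, hke, hk1c, hk1e, hn1a, hn1b,
            qpow_mod hq (k+1), hk1e, aeval_qbinom_R1 q b e]
          ring
        · -- (k+1) % m = 0
          have hem' : e + 1 = m := by omega
          have hk1eq : k + 1 = m * (c + 1) := by
            have : m * (c+1) = m * c + m := by ring
            omega
          have hk1c : (k+1) / m = c + 1 := by rw [hk1eq, Nat.mul_div_cancel_left _ hm]
          have hk1e : (k+1) % m = 0 := by rw [hk1eq, Nat.mul_mod_right]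
          rw [aeval_qbinom_R1, ih k, ih (k+1), hna, hnb, hkc, hke, hk1c, hk1e, hn1a, hn1b,
            qpow_mod hq (k+1), hk1e, aeval_qbinom_zero, aeval_qbinom_zero,
            aeval_qbinom_of_lt q (show b < e by omega)]
          simp
      · -- (n+1) % m = 0
        have hbm' : b + 1 = m := by omega
        have hn1eq : n + 1 = m * (a + 1) := by
          have : m * (a+1) = m * a + m := by ring
          omega
        have hn1a : (n+1) / m = a + 1 := by rw [hn1eq, Nat.mul_div_cancel_left _ hm]
        have hn1b : (n+1) % m = 0 := by rw [hn1eq, Nat.mul_mod_right]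
        rcases Nat.lt_or_ge (e+1) m with hem | hem
        · -- (k+1) % m ≠ 0 : both sides vanish
          have hk1eq : k + 1 = m * c + (e + 1) := by omega
          have hk1c : (k+1) / m = c := by
            rw [hk1eq, Nat.mul_add_div hm, Nat.div_eq_of_lt hem, add_zero]
          have hk1e : (k+1) % m = e + 1 := by
            rw [hk1eq, Nat.mul_add_mod, Nat.mod_eq_of_lt hem]
          rw [hn1a, hn1b, hk1c, hk1e, aeval_qbinom_of_lt q (show 0 < e + 1 by omega), mul_zero]
          rcases Nat.lt_or_ge n k with hlt | hge
          · exact aeval_qbinom_of_lt q (by omega)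
          · -- k ≤ n
            have hca : c ≤ a := by
              by_contra hc
              have : m * (c) ≥ m * (a+1) := Nat.mul_le_mul_left m (by omega)
              have : m * (a+1) = m * a + m := by ring
              omega
            obtain ⟨s, rfl⟩ : ∃ s, a = c + s := ⟨a - c, by omega⟩
            obtain ⟨u, hu⟩ : ∃ u, b = e + u := ⟨b - e, by omega⟩
            have hnk : n = k + (m * s + u) := by
              have : m * (c + s) = m * c + m * s := by ring
              omega
            rw [aeval_qbinom_R2 q n k (m*s+u) hnk, ih k, ih (k+1), hna, hnb, hkc, hke,
              hk1c, hk1e]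
            have hqpow : q ^ (m * s + u) = q ^ u := by
              rw [pow_add, pow_mul, hq.pow_eq_one, one_pow, one_mul]
            have hbrak : q ^ u * aeval q (qbinom b e) + aeval q (qbinom b (e+1)) = 0 := by
              rw [← aeval_qbinom_R2 q b e u hu, show b + 1 = m from hbm']
              exact aeval_qbinom_m_eq_zero hq (by omega) hem
            rw [hqpow]
            linear_combination (((c+s).choose c : ℕ) : ℂ) * hbrak
        · -- (k+1) % m = 0
          have hem' : e + 1 = m := by omega
          have heb : e = b := by omega
          have hk1eq : k + 1 = m * (c + 1) := by
            have : m * (c+1) = m * c + m := by ring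
            omega
          have hk1c : (k+1) / m = c + 1 := by rw [hk1eq, Nat.mul_div_cancel_left _ hm]
          have hk1e : (k+1) % m = 0 := by rw [hk1eq, Nat.mul_mod_right]
          rw [hn1a, hn1b, hk1c, hk1e, aeval_qbinom_zero]
          rcases Nat.lt_or_ge n k with hlt | hge
          · rw [aeval_qbinom_of_lt q (by omega)]
            have hcgt : a + 1 < c + 1 := by
              have h1 : m * (a+1) = m * a + m := by ring
              have h2 : m * (c+1) = m * c + m := by ring
              have : m * (a + 1) < m * (c + 1) := by omega
              have := Nat.lt_of_mul_lt_mul_left this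
              omega
            rw [Nat.choose_eq_zero_of_lt hcgt, Nat.cast_zero, zero_mul]
          · have hca : c ≤ a := by
              by_contra hc
              have h1 : m * c ≥ m * (a+1) := Nat.mul_le_mul_left m (by omega)
              have h2 : m * (a+1) = m * a + m := by ring
              omega
            obtain ⟨s, rfl⟩ : ∃ s, a = c + s := ⟨a - c, by omega⟩
            have hnk : n = k + m * s := by
              have : m * (c + s) = m * c + m * s := by ring
              omega
            rw [aeval_qbinom_R2 q n k (m*s) hnk, ih k, ih (k+1), hna, hnb, hkc, hke,
              hk1c, hk1e, heb, aeval_qbinom_self, aeval_qbinom_zero,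
              pow_mul, hq.pow_eq_one, one_pow, Nat.choose_succ_succ (c+s) c, Nat.cast_add]
            ring

lemma qlucas_dvd {q : ℂ} {m : ℕ} (hq : IsPrimitiveRoot q m) (hm : 0 < m)
    (n k : ℕ) (hn : m ∣ n) :
    aeval q (qbinom n k) = if m ∣ k then ((n / m).choose (k / m) : ℂ) else 0 := by
  rw [qlucas hq hm n k]
  obtain ⟨t, rfl⟩ := hn
  rw [Nat.mul_mod_right]
  by_cases hk : m ∣ k
  · obtain ⟨u, rfl⟩ := hk
    rw [if_pos ⟨u, rfl⟩, Nat.mul_mod_right, aeval_qbinom_zero, mul_one]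
  · rw [if_neg hk, aeval_qbinom_of_lt q (show 0 < k % m from ?_), mul_zero]
    rcases Nat.eq_zero_or_pos (k % m) with h | h
    · exact absurd (Nat.dvd_of_mod_eq_zero h) hk
    · exact h

lemma qmultinom_eval {q : ℂ} {m : ℕ} (hq : IsPrimitiveRoot q m) (hm : 0 < m) :
    ∀ (l : List ℕ) (N : ℕ), m ∣ N → l.sum ≤ N →
    aeval q (qmultinom N l) =
      if ∀ a ∈ l, m ∣ a then
        ((N / m).factorial : ℂ) /
          ((l.map (fun a => ((a / m).factorial : ℂ))).prod *
            ((N / m - (l.map (· / m)).sum).factorial : ℂ))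
      else 0
  | [], N, hN, _ => by
      simp only [qmultinom, map_one, List.map_nil, List.prod_nil, List.sum_nil, one_mul,
        Nat.sub_zero, if_pos (fun a h => absurd h List.not_mem_nil)]
      rw [div_self]
      exact_mod_cast Nat.factorial_ne_zero _
  | a :: l, N, hN, hsum => by
      have hsum' : a + l.sum ≤ N := by simpa [List.sum_cons] using hsum
      rw [show qmultinom N (a :: l) = qbinom N a * qmultinom (N - a) l from rfl, map_mul,
        qlucas_dvd hq hm N a hN]
      by_cases ha : m ∣ a
      · have hrec := qmultinom_eval hq hm l (N - a) (Nat.dvd_sub hN ha) (by omega)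
        rw [if_pos ha, hrec]
        by_cases hl : ∀ b ∈ l, m ∣ b
        · rw [if_pos hl, if_pos (by
            intro b hb
            rcases List.mem_cons.mp hb with rfl | hb'
            · exact ha
            · exact hl b hb')]
          -- arithmetic
          obtain ⟨A, rfl⟩ := hN
          obtain ⟨c, rfl⟩ := ha
          have hcA : c ≤ A := by
            have h1 : m * c ≤ m * A := by omega
            exact Nat.le_of_mul_le_mul_left h1 hm
          have hNa : m * A - m * c = m * (A - c) := by rw [Nat.mul_sub]
          rw [hNa, Nat.mul_div_cancel_left _ hm, Nat.mul_div_cancel_left _ hm,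
            Nat.mul_div_cancel_left _ hm]
          rw [List.map_cons, List.map_cons, List.prod_cons, List.sum_cons,
            Nat.mul_div_cancel_left _ hm, Nat.cast_choose ℂ hcA]
          have hfP : ((l.map (fun a => ((a / m).factorial : ℂ))).prod) ≠ 0 := by
            apply List.prod_ne_zero
            intro h0
            rcases List.mem_map.mp h0 with ⟨b, _, hb0⟩
            exact (Nat.cast_ne_zero.mpr (Nat.factorial_ne_zero _)) hb0
          have hf1 : ((c.factorial : ℂ)) ≠ 0 := Nat.cast_ne_zero.mpr (Nat.factorial_ne_zero _)
          have hf2 : (((A - c).factorial : ℂ)) ≠ 0 := Nat.cast_ne_zero.mpr (Nat.factorial_ne_zero _)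
          have hf3 : (((A - c - (l.map (· / m)).sum).factorial : ℂ)) ≠ 0 :=
            Nat.cast_ne_zero.mpr (Nat.factorial_ne_zero _)
          rw [show A - (c + (l.map (· / m)).sum) = A - c - (l.map (· / m)).sum from
            (Nat.sub_sub _ _ _).symm]
          field_simp
        · rw [if_neg hl, if_neg (by
            intro hc
            exact hl fun b hb => hc b (List.mem_cons_of_mem a hb)), mul_zero]
      · rw [if_neg ha, zero_mul, if_neg (by
          intro hc
          exact ha (hc a (List.mem_cons_self)))]

theorem stmt_7 (d N ℓ : ℕ) (hd : 0 < d) (hdN : d ∣ 2 * N) (α : Fin ℓ → ℕ)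
    (hα : ∑ i, α i ≤ N) (ω : ℂ) (hω : IsPrimitiveRoot ω d) :
    Polynomial.aeval (ω ^ 2) (qmultinom N (List.ofFn α)) =
      if ∀ i, d ∣ 2 * α i then
        ((N / (d / Nat.gcd 2 d)).factorial : ℂ) /
          ((∏ i, ((α i / (d / Nat.gcd 2 d)).factorial : ℂ)) *
            ((N / (d / Nat.gcd 2 d) - ∑ i, α i / (d / Nat.gcd 2 d)).factorial : ℂ))
      else 0 := by
  set m := d / Nat.gcd 2 d with hm
  have hg12 : Nat.gcd 2 d = 1 ∨ Nat.gcd 2 d = 2 :=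
    (Nat.dvd_prime Nat.prime_two).mp (Nat.gcd_dvd_left 2 d)
  have key : IsPrimitiveRoot (ω^2) m ∧ 0 < m ∧ (∀ x, (d ∣ 2*x ↔ m ∣ x)) := by
    rcases hg12 with h1 | h2
    · have hmd : m = d := by rw [hm, h1, Nat.div_one]
      have hcop : Nat.Coprime 2 d := h1
      refine ⟨hmd ▸ hω.pow_of_coprime 2 hcop, by omega, ?_⟩
      intro x
      rw [hmd]
      constructor
      · exact fun hx => (Nat.Coprime.dvd_of_dvd_mul_left (hcop.symm) hx)
      · exact fun hx => hx.mul_left 2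
    · have h2d : 2 ∣ d := h2 ▸ Nat.gcd_dvd_right 2 d
      obtain ⟨m', hm'⟩ := h2d
      have hmm : m = m' := by rw [hm, h2, hm', Nat.mul_div_cancel_left _ (by norm_num)]
      have hq : IsPrimitiveRoot (ω^2) m' := hω.pow hd hm'
      refine ⟨hmm ▸ hq, by omega, ?_⟩
      intro x
      rw [hmm, hm']
      exact (mul_dvd_mul_iff_left (show (2:ℕ) ≠ 0 by norm_num))
  obtain ⟨hq, hm0, hiff⟩ := key
  have hmN : m ∣ N := (hiff N).mp hdN
  rw [qmultinom_eval hq hm0 (List.ofFn α) N hmN (by rw [List.sum_ofFn]; exact hα)]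
  have hc : (∀ a ∈ List.ofFn α, m ∣ a) ↔ (∀ i, d ∣ 2 * α i) := by
    rw [List.forall_mem_ofFn_iff]
    exact forall_congr' fun i => (hiff (α i)).symm
  rw [List.map_ofFn, List.map_ofFn, List.prod_ofFn, List.sum_ofFn]
  by_cases hcond : ∀ i, d ∣ 2 * α i
  · rw [if_pos (hc.mpr hcond), if_pos hcond]
    simp [Function.comp]
  · rw [if_neg (fun h => hcond (hc.mp h)), if_neg hcond]
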